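/- Let μ ∈ H³((0,1),ℝ) and K ∈ ℕ*. Then Σ_{j=1}^∞ (λ_j − (λ₁+λ_K)/2) ⟨μφ₁,φ_j⟩⟨μφ_K,φ_j⟩ = ⟨(μ')²φ₁, φ_K⟩, where λ_j = (jπ)² and the series converges absolutely. -/

import Mathlib

open Real MeasureTheory

/-- `μ ∈ H³((0,1),ℝ)`: `μ` is `C²` with `μ''` absolutely continuous (primitive of some `g`)
and `μ''' = g ∈ L²(0,1)`. -/
def IsH3 (μ : ℝ → ℝ) : Prop :=
  ContDiff ℝ 2 μ ∧
  ∃ g : ℝ → ℝ,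
    MeasureTheory.MemLp g 2 (MeasureTheory.volume.restrict (Set.Ioc (0:ℝ) 1)) ∧
    ∀ x ∈ Set.Icc (0:ℝ) 1,
      deriv (deriv μ) x = deriv (deriv μ) 0 + ∫ t in (0:ℝ)..x, g t

/-- Eigenvalues `λ_k = (kπ)²` of the Dirichlet Laplacian. -/
noncomputable def lam (k : ℕ) : ℝ := ((k : ℝ) * Real.pi) ^ 2

/-- `⟨μφ_m,φ_j⟩ = 2∫₀¹ μ(x) sin(mπx) sin(jπx) dx`. -/
noncomputable def matCoeff (μ : ℝ → ℝ) (m j : ℕ) : ℝ :=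
  2 * ∫ x in (0:ℝ)..1, μ x * Real.sin (m * Real.pi * x) * Real.sin (j * Real.pi * x)


private instance fact02 : Fact ((0:ℝ) < 2) := ⟨two_pos⟩

section helpers
open Set


/-- odd extension -/
private noncomputable def oddExt (f : ℝ → ℝ) (x : ℝ) : ℝ := if 0 < x then f x else -f (-x)

private noncomputable def sineInt (f : ℝ → ℝ) (n : ℝ) : ℝ :=
  ∫ x in (0:ℝ)..1, f x * Real.sin (n * Real.pi * x)

private lemma sineInt_neg (f : ℝ → ℝ) (n : ℝ) : sineInt f (-n) = - sineInt f n := by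
  unfold sineInt
  rw [← intervalIntegral.integral_neg]
  congr 1; funext x; rw [neg_mul, neg_mul, Real.sin_neg]; ring

private lemma sineInt_zero (f : ℝ → ℝ) : sineInt f 0 = 0 := by
  unfold sineInt; simp

private lemma measurable_oddExt {f : ℝ → ℝ} (hf : Continuous f) : Measurable (oddExt f) := by
  unfold oddExt
  exact Measurable.ite measurableSet_Ioi hf.measurable (hf.measurable.comp measurable_neg).neg

private lemma oddExt_pos {f : ℝ → ℝ} {x : ℝ} (hx : 0 < x) : oddExt f x = f x := if_pos hx

private lemma oddExt_neg_arg {f : ℝ → ℝ} {x : ℝ} (hx : 0 < x) : oddExt f (-x) = - f x := by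
  unfold oddExt
  rw [if_neg (by linarith), neg_neg]

private lemma oddExt_bound {f : ℝ → ℝ} {C : ℝ} (h : ∀ x ∈ Icc (0:ℝ) 1, |f x| ≤ C) :
    ∀ x ∈ Icc (-1:ℝ) 1, |oddExt f x| ≤ C := by
  intro x hx
  unfold oddExt
  split
  · exact h x ⟨by linarith, hx.2⟩
  · rw [abs_neg]
    next h' => exact h (-x) ⟨by linarith [not_lt.mp h'], by linarith [hx.1]⟩

private lemma II_of_bdd {E : Type*} [NormedAddCommGroup E] {v : ℝ → E} {a b : ℝ}
    (hm : AEStronglyMeasurable v volume) (C : ℝ)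
    (hb : ∀ x ∈ Set.uIcc a b, ‖v x‖ ≤ C) : IntervalIntegrable v volume a b := by
  rw [intervalIntegrable_iff]
  apply Measure.integrableOn_of_bounded (M := C)
  · exact (measure_Ioc_lt_top).ne
  · exact hm
  · filter_upwards [ae_restrict_mem measurableSet_uIoc] with x hx
    exact hb x (Set.uIoc_subset_uIcc hx)

private lemma reflect_split {v : ℝ → ℝ} (hm : Measurable v) (C : ℝ)
    (hb : ∀ x ∈ Icc (-1:ℝ) 1, |v x| ≤ C) :
    ∫ x in (-1:ℝ)..1, v x = (∫ x in (0:ℝ)..1, v x) + ∫ x in (0:ℝ)..1, v (-x) := by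
  have hii : ∀ a b : ℝ, a ∈ Icc (-1:ℝ) 1 → b ∈ Icc (-1:ℝ) 1 → IntervalIntegrable v volume a b := by
    intro a b ha hb'
    apply II_of_bdd hm.aestronglyMeasurable C
    intro x hx
    rw [Real.norm_eq_abs]
    refine hb x ?_
    have : Set.uIcc a b ⊆ Icc (-1:ℝ) 1 := Set.uIcc_subset_Icc ha hb'
    exact this hx
  have h1 : IntervalIntegrable v volume (-1) 0 := hii _ _ (by norm_num) (by norm_num)
  have h2 : IntervalIntegrable v volume 0 1 := hii _ _ (by norm_num) (by norm_num)
  rw [← intervalIntegral.integral_add_adjacent_intervals h1 h2]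
  rw [intervalIntegral.integral_comp_neg v]
  norm_num
  ring

private lemma oddExt_cos {f : ℝ → ℝ} (hf : Continuous f) (C : ℝ)
    (hC : ∀ x ∈ Icc (0:ℝ) 1, |f x| ≤ C) (n : ℝ) :
    ∫ x in (-1:ℝ)..1, oddExt f x * Real.cos (n * Real.pi * x) = 0 := by
  have hm : Measurable (fun x => oddExt f x * Real.cos (n * Real.pi * x)) :=
    (measurable_oddExt hf).mul (Real.continuous_cos.comp (by fun_prop)).measurable
  have hb : ∀ x ∈ Icc (-1:ℝ) 1, |oddExt f x * Real.cos (n * Real.pi * x)| ≤ C := by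
    intro x hx
    rw [abs_mul]
    calc |oddExt f x| * |Real.cos (n * Real.pi * x)| ≤ |oddExt f x| * 1 := by
          apply mul_le_mul_of_nonneg_left (Real.abs_cos_le_one _) (abs_nonneg _)
      _ ≤ C := by rw [mul_one]; exact oddExt_bound hC x hx
  rw [reflect_split hm C hb]
  have e1 : ∫ x in (0:ℝ)..1, oddExt f x * Real.cos (n * Real.pi * x)
      = ∫ x in (0:ℝ)..1, f x * Real.cos (n * Real.pi * x) := by
    apply intervalIntegral.integral_congr_ae
    filter_upwards with x hx
    rw [Set.uIoc_of_le (by norm_num : (0:ℝ) ≤ 1)] at hx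
    rw [oddExt_pos hx.1]
  have e2 : ∫ x in (0:ℝ)..1, oddExt f (-x) * Real.cos (n * Real.pi * (-x))
      = ∫ x in (0:ℝ)..1, -(f x * Real.cos (n * Real.pi * x)) := by
    apply intervalIntegral.integral_congr_ae
    filter_upwards with x hx
    rw [Set.uIoc_of_le (by norm_num : (0:ℝ) ≤ 1)] at hx
    rw [oddExt_neg_arg hx.1, mul_neg, Real.cos_neg]; ring
  rw [e1, e2, intervalIntegral.integral_neg]
  ring

private lemma oddExt_sin {f : ℝ → ℝ} (hf : Continuous f) (C : ℝ)
    (hC : ∀ x ∈ Icc (0:ℝ) 1, |f x| ≤ C) (n : ℝ) :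
    ∫ x in (-1:ℝ)..1, oddExt f x * Real.sin (n * Real.pi * x) = 2 * sineInt f n := by
  have hm : Measurable (fun x => oddExt f x * Real.sin (n * Real.pi * x)) :=
    (measurable_oddExt hf).mul (Real.continuous_sin.comp (by fun_prop)).measurable
  have hb : ∀ x ∈ Icc (-1:ℝ) 1, |oddExt f x * Real.sin (n * Real.pi * x)| ≤ C := by
    intro x hx
    rw [abs_mul]
    calc |oddExt f x| * |Real.sin (n * Real.pi * x)| ≤ |oddExt f x| * 1 := by
          apply mul_le_mul_of_nonneg_left (Real.abs_sin_le_one _) (abs_nonneg _)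
      _ ≤ C := by rw [mul_one]; exact oddExt_bound hC x hx
  rw [reflect_split hm C hb]
  have e1 : ∫ x in (0:ℝ)..1, oddExt f x * Real.sin (n * Real.pi * x)
      = ∫ x in (0:ℝ)..1, f x * Real.sin (n * Real.pi * x) := by
    apply intervalIntegral.integral_congr_ae
    filter_upwards with x hx
    rw [Set.uIoc_of_le (by norm_num : (0:ℝ) ≤ 1)] at hx
    rw [oddExt_pos hx.1]
  have e2 : ∫ x in (0:ℝ)..1, oddExt f (-x) * Real.sin (n * Real.pi * (-x))
      = ∫ x in (0:ℝ)..1, f x * Real.sin (n * Real.pi * x) := by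
    apply intervalIntegral.integral_congr_ae
    filter_upwards with x hx
    rw [Set.uIoc_of_le (by norm_num : (0:ℝ) ≤ 1)] at hx
    rw [oddExt_neg_arg hx.1, mul_neg, Real.sin_neg]; ring
  rw [e1, e2]
  unfold sineInt
  ring

private lemma oddExt_mul_oddExt {f g : ℝ → ℝ} (hf : Continuous f) (hg : Continuous g)
    {Cf Cg : ℝ} (hCf : ∀ x ∈ Icc (0:ℝ) 1, |f x| ≤ Cf) (hCg : ∀ x ∈ Icc (0:ℝ) 1, |g x| ≤ Cg) :
    ∫ x in (-1:ℝ)..1, oddExt f x * oddExt g x = 2 * ∫ x in (0:ℝ)..1, f x * g x := by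
  have hCf0 : 0 ≤ Cf := le_trans (abs_nonneg _) (hCf 0 (by norm_num))
  have hm : Measurable (fun x => oddExt f x * oddExt g x) :=
    (measurable_oddExt hf).mul (measurable_oddExt hg)
  have hb : ∀ x ∈ Icc (-1:ℝ) 1, |oddExt f x * oddExt g x| ≤ Cf * Cg := by
    intro x hx
    rw [abs_mul]
    exact mul_le_mul (oddExt_bound hCf x hx) (oddExt_bound hCg x hx) (abs_nonneg _) hCf0
  rw [reflect_split hm (Cf * Cg) hb]
  have e1 : ∫ x in (0:ℝ)..1, oddExt f x * oddExt g x = ∫ x in (0:ℝ)..1, f x * g x := by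
    apply intervalIntegral.integral_congr_ae
    filter_upwards with x hx
    rw [Set.uIoc_of_le (by norm_num : (0:ℝ) ≤ 1)] at hx
    rw [oddExt_pos hx.1, oddExt_pos hx.1]
  have e2 : ∫ x in (0:ℝ)..1, oddExt f (-x) * oddExt g (-x) = ∫ x in (0:ℝ)..1, f x * g x := by
    apply intervalIntegral.integral_congr_ae
    filter_upwards with x hx
    rw [Set.uIoc_of_le (by norm_num : (0:ℝ) ≤ 1)] at hx
    rw [oddExt_neg_arg hx.1, oddExt_neg_arg hx.1]; ring
  rw [e1, e2]; ring

private lemma memLp_oddExt {f : ℝ → ℝ} (hf : Continuous f) :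
    MemLp (AddCircle.liftIoc 2 (-1) (fun x => (oddExt f x : ℂ))) 2 AddCircle.haarAddCircle := by
  obtain ⟨C, hC⟩ := (isCompact_Icc (a := (0:ℝ)) (b := 1)).exists_bound_of_continuousOn hf.continuousOn
  simp only [Real.norm_eq_abs] at hC
  have hmeas : Measurable (AddCircle.liftIoc 2 (-1) fun x => (oddExt f x : ℂ)) := by
    have h : AddCircle.liftIoc 2 (-1) (fun x => (oddExt f x : ℂ))
        = (fun y : Set.Ioc (-1:ℝ) (-1+2) => ((oddExt f y : ℂ))) ∘ (AddCircle.measurableEquivIoc 2 (-1)) := rfl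
    rw [h]
    exact ((Complex.measurable_ofReal.comp (measurable_oddExt hf)).comp measurable_subtype_coe).comp
      (AddCircle.measurableEquivIoc 2 (-1)).measurable
  apply MemLp.of_bound hmeas.aestronglyMeasurable C
  filter_upwards with z
  obtain ⟨y, hy⟩ : ∃ y : Set.Ioc (-1:ℝ) (-1+2), (((y:ℝ) : ℝ) : AddCircle (2:ℝ)) = z :=
    ⟨AddCircle.equivIoc 2 (-1) z, (AddCircle.equivIoc 2 (-1)).symm_apply_apply z⟩
  rw [← hy, AddCircle.liftIoc_coe_apply y.2]
  rw [Complex.norm_real, Real.norm_eq_abs]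
  refine oddExt_bound hC (y:ℝ) ?_
  have h1 := y.2.1
  have h2 := y.2.2
  constructor
  · linarith
  · linarith

private lemma fourierCoeff_oddExt {f : ℝ → ℝ} (hf : Continuous f) (n : ℤ) :
    fourierCoeff (AddCircle.liftIoc 2 (-1) (fun x => (oddExt f x : ℂ))) n
      = -(Complex.I) * (sineInt f n) := by
  obtain ⟨C, hC⟩ := (isCompact_Icc (a := (0:ℝ)) (b := 1)).exists_bound_of_continuousOn hf.continuousOn
  simp only [Real.norm_eq_abs] at hC
  rw [fourierCoeff_liftIoc_eq, fourierCoeffOn_eq_integral]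
  have hint : (-1:ℝ) + 2 = 1 := by norm_num
  rw [show ((-1:ℝ) + 2 - (-1)) = 2 by norm_num]
  rw [hint]
  -- transform integrand
  have key : ∀ x : ℝ, (fourier (-n)) (x : AddCircle (2:ℝ)) • ((oddExt f x : ℂ))
      = ((oddExt f x * Real.cos ((n:ℝ) * Real.pi * x) : ℝ) : ℂ)
        + ((-(oddExt f x * Real.sin ((n:ℝ) * Real.pi * x)) : ℝ) : ℂ) * Complex.I := by
    intro x
    rw [fourier_coe_apply, smul_eq_mul]
    have harg : 2 * (Real.pi:ℂ) * Complex.I * (-n : ℤ) * (x:ℝ) / (2:ℝ)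
        = ((-((n:ℝ) * Real.pi * x) : ℝ) : ℂ) * Complex.I := by
      push_cast; ring
    rw [harg, Complex.exp_mul_I, ← Complex.ofReal_cos, ← Complex.ofReal_sin,
      Real.cos_neg, Real.sin_neg]
    push_cast
    ring
  rw [intervalIntegral.integral_congr (fun x _ => key x)]
  -- split the integral
  have hmc : AEStronglyMeasurable
      (fun x => ((oddExt f x * Real.cos ((n:ℝ) * Real.pi * x) : ℝ) : ℂ)) volume := by
    apply Measurable.aestronglyMeasurable
    exact Complex.measurable_ofReal.comp
      ((measurable_oddExt hf).mul (Real.continuous_cos.comp (by fun_prop)).measurable)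
  have hms : AEStronglyMeasurable
      (fun x => ((-(oddExt f x * Real.sin ((n:ℝ) * Real.pi * x)) : ℝ) : ℂ) * Complex.I) volume := by
    apply Measurable.aestronglyMeasurable
    apply Measurable.mul_const
    exact Complex.measurable_ofReal.comp
      (((measurable_oddExt hf).mul (Real.continuous_sin.comp (by fun_prop)).measurable)).neg
  have hb : ∀ x ∈ Set.uIcc (-1:ℝ) 1, |oddExt f x| ≤ C := by
    intro x hx
    apply oddExt_bound hC
    rwa [Set.uIcc_of_le (by norm_num : (-1:ℝ) ≤ 1)] at hx
  have hIc : IntervalIntegrable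
      (fun x => ((oddExt f x * Real.cos ((n:ℝ) * Real.pi * x) : ℝ) : ℂ)) volume (-1) 1 := by
    apply II_of_bdd hmc C
    intro x hx
    rw [Complex.norm_real, Real.norm_eq_abs, abs_mul]
    calc |oddExt f x| * |Real.cos ((n:ℝ) * Real.pi * x)| ≤ |oddExt f x| * 1 :=
          mul_le_mul_of_nonneg_left (Real.abs_cos_le_one _) (abs_nonneg _)
      _ ≤ C := by rw [mul_one]; exact hb x hx
  have hIs : IntervalIntegrable
      (fun x => ((-(oddExt f x * Real.sin ((n:ℝ) * Real.pi * x)) : ℝ) : ℂ) * Complex.I) volume (-1) 1 := by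
    apply II_of_bdd hms C
    intro x hx
    rw [norm_mul, Complex.norm_I, mul_one, Complex.norm_real, Real.norm_eq_abs, abs_neg, abs_mul]
    calc |oddExt f x| * |Real.sin ((n:ℝ) * Real.pi * x)| ≤ |oddExt f x| * 1 :=
          mul_le_mul_of_nonneg_left (Real.abs_sin_le_one _) (abs_nonneg _)
      _ ≤ C := by rw [mul_one]; exact hb x hx
  rw [intervalIntegral.integral_add hIc hIs, intervalIntegral.integral_mul_const,
    intervalIntegral.integral_ofReal, intervalIntegral.integral_ofReal,
    intervalIntegral.integral_neg, oddExt_cos hf C hC, oddExt_sin hf C hC]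
  rw [Complex.real_smul]
  push_cast
  ring

private lemma fourierCoeff_congr_ae' {h1 h2 : AddCircle (2:ℝ) → ℂ}
    (h : h1 =ᵐ[AddCircle.haarAddCircle] h2) (n : ℤ) : fourierCoeff h1 n = fourierCoeff h2 n := by
  unfold fourierCoeff
  exact integral_congr_ae (h.mono fun x hx => by dsimp only; rw [hx])

private lemma inner_toLp {f g : ℝ → ℝ} (hf : Continuous f) (hg : Continuous g) :
    (inner ℂ ((memLp_oddExt hf).toLp _) ((memLp_oddExt hg).toLp _) : ℂ)
      = ((∫ x in (0:ℝ)..1, f x * g x : ℝ) : ℂ) := by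
  obtain ⟨Cf, hCf⟩ := (isCompact_Icc (a := (0:ℝ)) (b := 1)).exists_bound_of_continuousOn hf.continuousOn
  obtain ⟨Cg, hCg⟩ := (isCompact_Icc (a := (0:ℝ)) (b := 1)).exists_bound_of_continuousOn hg.continuousOn
  simp only [Real.norm_eq_abs] at hCf hCg
  set F := AddCircle.liftIoc 2 (-1) (fun x => (oddExt f x : ℂ)) with hF
  set G := AddCircle.liftIoc 2 (-1) (fun x => (oddExt g x : ℂ)) with hG
  set h : AddCircle (2:ℝ) → ℂ := fun z => (starRingEnd ℂ) (F z) * G z with hh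
  rw [MeasureTheory.L2.inner_def]
  have hae : (fun z => (inner ℂ ((((memLp_oddExt hf).toLp _) : Lp ℂ 2 AddCircle.haarAddCircle) z)
        ((((memLp_oddExt hg).toLp _) : Lp ℂ 2 AddCircle.haarAddCircle) z) : ℂ))
      =ᵐ[AddCircle.haarAddCircle] h := by
    filter_upwards [(memLp_oddExt hf).coeFn_toLp, (memLp_oddExt hg).coeFn_toLp] with z h1 h2
    rw [hh]
    dsimp only
    rw [h1, h2, RCLike.inner_apply, mul_comm]
  rw [integral_congr_ae hae]
  have hv : ∫ z, h z ∂(volume : Measure (AddCircle (2:ℝ))) = (2:ℝ) • ∫ z, h z ∂AddCircle.haarAddCircle := by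
    rw [AddCircle.volume_eq_smul_haarAddCircle, integral_smul_measure]
    norm_num
  have hpre := AddCircle.intervalIntegral_preimage 2 (-1) h
  have key : ∫ x in (-1:ℝ)..(-1+2), h ↑x = ((2 * ∫ x in (0:ℝ)..1, f x * g x : ℝ) : ℂ) := by
    have hc : ∫ x in (-1:ℝ)..(-1+2), h ↑x
        = ∫ x in (-1:ℝ)..(-1+2), ((oddExt f x * oddExt g x : ℝ) : ℂ) := by
      apply intervalIntegral.integral_congr_ae
      filter_upwards with x hx
      rw [Set.uIoc_of_le (by norm_num : (-1:ℝ) ≤ -1+2)] at hx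
      have hmem : x ∈ Set.Ioc (-1:ℝ) (-1+2) := ⟨hx.1, hx.2⟩
      rw [hh]
      dsimp only
      rw [hF, hG, AddCircle.liftIoc_coe_apply hmem, AddCircle.liftIoc_coe_apply hmem,
        Complex.conj_ofReal, ← Complex.ofReal_mul]
    rw [hc, intervalIntegral.integral_ofReal]
    rw [show ((-1:ℝ)+2 : ℝ) = 1 by norm_num]
    rw [oddExt_mul_oddExt hf hg hCf hCg]
  calc ∫ z, h z ∂AddCircle.haarAddCircle
      = (2:ℝ)⁻¹ • ((2:ℝ) • ∫ z, h z ∂AddCircle.haarAddCircle) := by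
        rw [smul_smul]; norm_num
    _ = (2:ℝ)⁻¹ • ∫ x in (-1:ℝ)..(-1+2), h ↑x := by rw [← hv, hpre]
    _ = ((∫ x in (0:ℝ)..1, f x * g x : ℝ) : ℂ) := by
        rw [key, Complex.real_smul]
        push_cast
        ring

private lemma parseval_sine {f g : ℝ → ℝ} (hf : Continuous f) (hg : Continuous g) :
    HasSum (fun j : ℕ => 2 * (sineInt f ((j:ℝ)+1) * sineInt g ((j:ℝ)+1)))
      (∫ x in (0:ℝ)..1, f x * g x) := by
  set fL := (memLp_oddExt hf).toLp _ with hfL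
  set gL := (memLp_oddExt hg).toLp _ with hgL
  have hcoef : ∀ (h : ℝ → ℝ) (hh : Continuous h) (i : ℤ),
      fourierCoeff (((memLp_oddExt hh).toLp _ : Lp ℂ 2 AddCircle.haarAddCircle) : AddCircle (2:ℝ) → ℂ) i
        = -(Complex.I) * (sineInt h i) := by
    intro h hh i
    rw [fourierCoeff_congr_ae' (memLp_oddExt hh).coeFn_toLp i, fourierCoeff_oddExt hh i]
  have H := lp.hasSum_inner (𝕜 := ℂ) ((fourierBasis (T := 2)).repr fL) ((fourierBasis (T := 2)).repr gL)
  rw [LinearIsometryEquiv.inner_map_map] at H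
  rw [hfL, hgL, inner_toLp hf hg] at H
  simp only [RCLike.inner_apply, fourierBasis_repr] at H
  have Hfun : (fun i : ℤ => (starRingEnd ℂ)
        (fourierCoeff ((((memLp_oddExt hf).toLp _ : Lp ℂ 2 AddCircle.haarAddCircle)) : AddCircle (2:ℝ) → ℂ) i)
        * fourierCoeff ((((memLp_oddExt hg).toLp _ : Lp ℂ 2 AddCircle.haarAddCircle)) : AddCircle (2:ℝ) → ℂ) i)
      = fun i : ℤ => ((sineInt f i * sineInt g i : ℝ) : ℂ) := by
    funext i
    rw [hcoef f hf i, hcoef g hg i, map_mul, map_neg, Complex.conj_I, Complex.conj_ofReal]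
    push_cast
    linear_combination (-((sineInt f i : ℂ) * (sineInt g i : ℝ))) * Complex.I_sq
  conv at H => enter [1, i]; rw [mul_comm]
  rw [Hfun] at H
  have H2 := (Complex.reCLM).hasSum H
  simp only [Complex.reCLM_apply, Complex.ofReal_re] at H2
  have H5 : HasSum (fun n : ℕ => 2 * (sineInt f (n:ℝ) * sineInt g (n:ℝ)))
      (∫ x in (0:ℝ)..1, f x * g x) := by
    have H3 := H2.nat_add_neg
    simpa [sineInt_neg, sineInt_zero, two_mul] using H3
  have H6 := (hasSum_nat_add_iff
    (f := fun n : ℕ => 2 * (sineInt f (n:ℝ) * sineInt g (n:ℝ))) 1).mpr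
    (by simpa [sineInt_zero] using H5)
  simpa using H6

private lemma hasDerivAt_sin_mul (c x : ℝ) :
    HasDerivAt (fun y => Real.sin (c * y)) (c * Real.cos (c * x)) x := by
  have h := (Real.hasDerivAt_sin (c * x)).comp x ((hasDerivAt_id x).const_mul c)
  refine h.congr_deriv ?_
  simp [mul_comm]

private lemma hasDerivAt_cos_mul (c x : ℝ) :
    HasDerivAt (fun y => Real.cos (c * y)) (-(c * Real.sin (c * x))) x := by
  have h := (Real.hasDerivAt_cos (c * x)).comp x ((hasDerivAt_id x).const_mul c)
  refine h.congr_deriv ?_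
  simp; ring

private lemma sine_ibp {F F' F'' : ℝ → ℝ}
    (hF' : ∀ x, HasDerivAt F (F' x) x) (hF'' : ∀ x, HasDerivAt F' (F'' x) x)
    (hc2 : Continuous F'') (h0 : F 0 = 0) (h1 : F 1 = 0) (n : ℕ) :
    sineInt F'' n = -(((n:ℝ) * Real.pi)^2 * sineInt F n) := by
  set c := (n:ℝ) * Real.pi with hc
  have hcF : Continuous F := by
    rw [continuous_iff_continuousAt]; exact fun x => (hF' x).continuousAt
  have hcF' : Continuous F' := by
    rw [continuous_iff_continuousAt]; exact fun x => (hF'' x).continuousAt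
  have hH : ∀ x, HasDerivAt (fun y => F' y * Real.sin (c * y) - c * (F y * Real.cos (c * y)))
      (F'' x * Real.sin (c * x) + c^2 * (F x * Real.sin (c * x))) x := by
    intro x
    have hA := (hF'' x).mul (hasDerivAt_sin_mul c x)
    have hB := ((hF' x).mul (hasDerivAt_cos_mul c x)).const_mul c
    have := hA.sub hB
    refine this.congr_deriv ?_
    ring
  have hint : IntervalIntegrable
      (fun x => F'' x * Real.sin (c * x) + c^2 * (F x * Real.sin (c * x))) volume 0 1 := by
    apply Continuous.intervalIntegrable
    fun_prop
  have heq := intervalIntegral.integral_eq_sub_of_hasDerivAt (fun x _ => hH x) hint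
  have hbd : (F' 1 * Real.sin (c * 1) - c * (F 1 * Real.cos (c * 1)))
      - (F' 0 * Real.sin (c * 0) - c * (F 0 * Real.cos (c * 0))) = 0 := by
    rw [h0, h1, hc, mul_one, mul_zero, Real.sin_zero, Real.sin_nat_mul_pi]
    ring
  rw [hbd] at heq
  have hi1 : IntervalIntegrable (fun x => F'' x * Real.sin (c * x)) volume 0 1 := by
    apply Continuous.intervalIntegrable; fun_prop
  have hi2 : IntervalIntegrable (fun x => F x * Real.sin (c * x)) volume 0 1 := by
    apply Continuous.intervalIntegrable; fun_prop
  rw [intervalIntegral.integral_add hi1 (hi2.const_mul (c^2)),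
    intervalIntegral.integral_const_mul] at heq
  unfold sineInt
  rw [← hc]
  linarith [heq]

private noncomputable def Fm (μ : ℝ → ℝ) (m : ℕ) (x : ℝ) : ℝ :=
  μ x * Real.sin ((m:ℝ) * Real.pi * x)

private noncomputable def D1m (μ : ℝ → ℝ) (m : ℕ) (x : ℝ) : ℝ :=
  deriv μ x * Real.sin ((m:ℝ) * Real.pi * x)
    + (m:ℝ) * Real.pi * (μ x * Real.cos ((m:ℝ) * Real.pi * x))

private noncomputable def D2m (μ : ℝ → ℝ) (m : ℕ) (x : ℝ) : ℝ :=
  deriv (deriv μ) x * Real.sin ((m:ℝ) * Real.pi * x)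
    + 2 * ((m:ℝ) * Real.pi) * deriv μ x * Real.cos ((m:ℝ) * Real.pi * x)
    - ((m:ℝ) * Real.pi)^2 * (μ x * Real.sin ((m:ℝ) * Real.pi * x))

variable {μ : ℝ → ℝ}

private lemma hasDerivAt_Fm (hd1 : ∀ x, HasDerivAt μ (deriv μ x) x) (m : ℕ) (x : ℝ) :
    HasDerivAt (Fm μ m) (D1m μ m x) x := by
  have h := (hd1 x).mul (hasDerivAt_sin_mul ((m:ℝ) * Real.pi) x)
  unfold Fm D1m
  refine h.congr_deriv ?_
  ring

private lemma hasDerivAt_D1m (hd1 : ∀ x, HasDerivAt μ (deriv μ x) x)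
    (hd2 : ∀ x, HasDerivAt (deriv μ) (deriv (deriv μ) x) x) (m : ℕ) (x : ℝ) :
    HasDerivAt (D1m μ m) (D2m μ m x) x := by
  have hA := (hd2 x).mul (hasDerivAt_sin_mul ((m:ℝ) * Real.pi) x)
  have hB := ((hd1 x).mul (hasDerivAt_cos_mul ((m:ℝ) * Real.pi) x)).const_mul ((m:ℝ) * Real.pi)
  have h := hA.add hB
  unfold D1m D2m
  refine h.congr_deriv ?_
  ring

private lemma matCoeff_eq (m j : ℕ) : matCoeff μ m j = 2 * sineInt (Fm μ m) j := rfl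

private lemma Fm_zero (m : ℕ) : Fm μ m 0 = 0 := by unfold Fm; simp

private lemma Fm_one (m : ℕ) : Fm μ m 1 = 0 := by
  unfold Fm; rw [mul_one, Real.sin_nat_mul_pi]; ring

private lemma sineInt_D2m (hd1 : ∀ x, HasDerivAt μ (deriv μ x) x)
    (hd2 : ∀ x, HasDerivAt (deriv μ) (deriv (deriv μ) x) x)
    (hc2 : Continuous (deriv (deriv μ))) (m n : ℕ) :
    sineInt (D2m μ m) n = -(((n:ℝ) * Real.pi)^2 * sineInt (Fm μ m) n) := by
  have hc1 : Continuous (deriv μ) := by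
    rw [continuous_iff_continuousAt]; exact fun x => (hd2 x).continuousAt
  have hc0 : Continuous μ := by
    rw [continuous_iff_continuousAt]; exact fun x => (hd1 x).continuousAt
  refine sine_ibp (hasDerivAt_Fm hd1 m) (hasDerivAt_D1m hd1 hd2 m) ?_ (Fm_zero m) (Fm_one m) n
  unfold D2m
  fun_prop

private lemma matCoeff_bound (hd1 : ∀ x, HasDerivAt μ (deriv μ x) x)
    (hd2 : ∀ x, HasDerivAt (deriv μ) (deriv (deriv μ) x) x)
    (hc2 : Continuous (deriv (deriv μ))) (m : ℕ) (Cm : ℝ)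
    (hCm : ∀ x ∈ Icc (0:ℝ) 1, |D2m μ m x| ≤ Cm) (n : ℕ) (hn : 0 < n) :
    |matCoeff μ m n| ≤ 2 * Cm / lam n := by
  have hlam : lam n = (((n:ℕ):ℝ) * Real.pi)^2 := rfl
  have hnpos : (0:ℝ) < (n:ℝ) := by exact_mod_cast hn
  have hlampos : 0 < lam n := by
    rw [hlam]; positivity
  have hs : |sineInt (D2m μ m) n| ≤ Cm := by
    have hb : ∀ x ∈ Set.uIoc (0:ℝ) 1, ‖D2m μ m x * Real.sin (((n:ℕ):ℝ) * Real.pi * x)‖ ≤ Cm := by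
      intro x hx
      rw [Set.uIoc_of_le (by norm_num : (0:ℝ) ≤ 1)] at hx
      rw [Real.norm_eq_abs, abs_mul]
      calc |D2m μ m x| * |Real.sin (((n:ℕ):ℝ) * Real.pi * x)| ≤ |D2m μ m x| * 1 :=
            mul_le_mul_of_nonneg_left (Real.abs_sin_le_one _) (abs_nonneg _)
        _ ≤ Cm := by rw [mul_one]; exact hCm x ⟨hx.1.le, hx.2⟩
    have := intervalIntegral.norm_integral_le_of_norm_le_const (a := (0:ℝ)) (b := 1)
      (f := fun x => D2m μ m x * Real.sin (((n:ℕ):ℝ) * Real.pi * x)) hb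
    rw [Real.norm_eq_abs] at this
    unfold sineInt
    calc |∫ x in (0:ℝ)..1, D2m μ m x * Real.sin ((n:ℝ) * Real.pi * x)| ≤ Cm * |1 - 0| := this
      _ = Cm := by norm_num
  have hrel := sineInt_D2m hd1 hd2 hc2 m n
  rw [matCoeff_eq]
  have hsf : sineInt (Fm μ m) ((n:ℕ):ℝ) = -(sineInt (D2m μ m) ((n:ℕ):ℝ)) / lam n := by
    rw [hrel, hlam]
    have : (((n:ℕ):ℝ) * Real.pi)^2 ≠ 0 := by positivity
    field_simp
  rw [hsf]
  calc |2 * (-sineInt (D2m μ m) ((n:ℕ):ℝ) / lam n)|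
      = 2 * (|sineInt (D2m μ m) ((n:ℕ):ℝ)| / lam n) := by
        rw [abs_mul, abs_div, abs_neg, abs_of_pos hlampos, abs_two]
    _ ≤ 2 * (Cm / lam n) := by gcongr
    _ = 2 * Cm / lam n := by ring

private lemma sineInt_comb {a b : ℝ → ℝ} (ha : Continuous a) (hb : Continuous b) (c n : ℝ) :
    sineInt (fun x => -(a x) - c * b x) n = -(sineInt a n) - c * sineInt b n := by
  unfold sineInt
  have h1 : IntervalIntegrable (fun x => -(a x * Real.sin (n * Real.pi * x))) volume 0 1 := by
    apply Continuous.intervalIntegrable; fun_prop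
  have h2 : IntervalIntegrable (fun x => (-c) * (b x * Real.sin (n * Real.pi * x))) volume 0 1 := by
    apply Continuous.intervalIntegrable; fun_prop
  have hpt : ∀ x : ℝ, (-(a x) - c * b x) * Real.sin (n * Real.pi * x)
      = -(a x * Real.sin (n * Real.pi * x)) + (-c) * (b x * Real.sin (n * Real.pi * x)) :=
    fun x => by ring
  simp_rw [hpt]
  rw [intervalIntegral.integral_add h1 h2,
    intervalIntegral.integral_neg, intervalIntegral.integral_const_mul]
  ring

end helpers

/-- For `μ ∈ H³` and `K ∈ ℕ*`:
`Σ_{j≥1} (λ_j − (λ₁+λ_K)/2) ⟨μφ₁,φ_j⟩⟨μφ_K,φ_j⟩ = ⟨(μ')²φ₁,φ_K⟩`,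
with absolute convergence of the series. -/
theorem series_identity_for_AK (μ : ℝ → ℝ) (hμ : IsH3 μ) (K : ℕ) (hK : 0 < K) :
    Summable (fun j : ℕ =>
      |(lam (j + 1) - (lam 1 + lam K) / 2) * matCoeff μ 1 (j + 1) * matCoeff μ K (j + 1)|) ∧
    ∑' j : ℕ, (lam (j + 1) - (lam 1 + lam K) / 2) * matCoeff μ 1 (j + 1) * matCoeff μ K (j + 1) =
      2 * ∫ x in (0:ℝ)..1,
        (deriv μ x) ^ 2 * Real.sin (Real.pi * x) * Real.sin (K * Real.pi * x) := by
  classical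
  obtain ⟨hμ2, -⟩ := hμ
  have hD : Differentiable ℝ μ := hμ2.differentiable (by norm_num)
  have hd1 : ∀ x, HasDerivAt μ (deriv μ x) x := fun x => (hD x).hasDerivAt
  have hc1' : ContDiff ℝ 1 (deriv μ) := by
    have h2 : ContDiff ℝ ((1:ℕ) + 1 : ℕ) μ := by exact_mod_cast hμ2
    have := (contDiff_succ_iff_deriv (n := 1)).mp (by exact_mod_cast h2)
    exact this.2.2
  have hd2 : ∀ x, HasDerivAt (deriv μ) (deriv (deriv μ) x) x :=
    fun x => ((hc1'.differentiable one_ne_zero) x).hasDerivAt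
  have hc2 : Continuous (deriv (deriv μ)) := hc1'.continuous_deriv le_rfl
  have hc1 : Continuous (deriv μ) := hc1'.continuous
  have hc0 : Continuous μ := hμ2.continuous
  have hFmc : ∀ m : ℕ, Continuous (Fm μ m) := by
    intro m; unfold Fm; fun_prop
  have hD2c : ∀ m : ℕ, Continuous (D2m μ m) := by
    intro m; unfold D2m; fun_prop
  set c : ℝ := (lam 1 + lam K) / 2 with hcdef
  have hcnn : 0 ≤ c := by
    rw [hcdef]; unfold lam; positivity
  set u : ℝ → ℝ := fun x => -(D2m μ 1 x) - c * Fm μ 1 x with hu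
  set v : ℝ → ℝ := fun x => -(D2m μ K x) - c * Fm μ K x with hv
  have huc : Continuous u := by
    rw [hu]; exact ((hD2c 1).neg).sub (continuous_const.mul (hFmc 1))
  have hvc : Continuous v := by
    rw [hv]; exact ((hD2c K).neg).sub (continuous_const.mul (hFmc K))
  -- bounds for the coefficients
  obtain ⟨C1, hC1⟩ := (isCompact_Icc (a := (0:ℝ)) (b := 1)).exists_bound_of_continuousOn
    (hD2c 1).continuousOn
  obtain ⟨CK, hCK⟩ := (isCompact_Icc (a := (0:ℝ)) (b := 1)).exists_bound_of_continuousOn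
    (hD2c K).continuousOn
  simp only [Real.norm_eq_abs] at hC1 hCK
  have hC1nn : 0 ≤ C1 := le_trans (abs_nonneg _) (hC1 0 (by norm_num))
  have hCKnn : 0 ≤ CK := le_trans (abs_nonneg _) (hCK 0 (by norm_num))
  have hb1 : ∀ j : ℕ, |matCoeff μ 1 (j+1)| ≤ 2*C1/lam (j+1) :=
    fun j => matCoeff_bound hd1 hd2 hc2 1 C1 hC1 (j+1) (Nat.succ_pos j)
  have hbK : ∀ j : ℕ, |matCoeff μ K (j+1)| ≤ 2*CK/lam (j+1) :=
    fun j => matCoeff_bound hd1 hd2 hc2 K CK hCK (j+1) (Nat.succ_pos j)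
  have hπ := Real.pi_pos
  have hlam' : ∀ j : ℕ, lam (j+1) = (((j:ℝ)+1)*Real.pi)^2 := by
    intro j; unfold lam; push_cast; ring
  have hlampos : ∀ j : ℕ, 0 < lam (j+1) := by
    intro j; rw [hlam' j]; positivity
  -- comparison function for summability
  have hS2 : Summable (fun j : ℕ => 1/((j:ℝ)+1)^2) := by
    have h0 : Summable (fun n : ℕ => 1/(n:ℝ)^2) := by
      exact_mod_cast summable_one_div_nat_pow.mpr one_lt_two
    exact ((summable_nat_add_iff (f := fun n : ℕ => 1/(n:ℝ)^2) 1).mpr h0).congr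
      (fun j => by push_cast; ring)
  have hS4 : Summable (fun j : ℕ => 1/((j:ℝ)+1)^4) := by
    have h0 : Summable (fun n : ℕ => 1/(n:ℝ)^4) := by
      exact_mod_cast summable_one_div_nat_pow.mpr (by norm_num)
    exact ((summable_nat_add_iff (f := fun n : ℕ => 1/(n:ℝ)^4) 1).mpr h0).congr
      (fun j => by push_cast; ring)
  have hg_eq : ∀ j : ℕ, 4*C1*CK/lam (j+1) + 4*C1*CK*c/(lam (j+1))^2
      = (4*C1*CK/Real.pi^2) * (1/((j:ℝ)+1)^2) + (4*C1*CK*c/Real.pi^4) * (1/((j:ℝ)+1)^4) := by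
    intro j
    rw [hlam' j]
    have hj : ((j:ℝ)+1) ≠ 0 := by positivity
    have hpine : Real.pi ≠ 0 := ne_of_gt hπ
    field_simp
  have hgsum : Summable (fun j : ℕ => 4*C1*CK/lam (j+1) + 4*C1*CK*c/(lam (j+1))^2) :=
    ((hS2.mul_left (4*C1*CK/Real.pi^2)).add
      (hS4.mul_left (4*C1*CK*c/Real.pi^4))).congr (fun j => (hg_eq j).symm)
  have hcmp : ∀ j : ℕ, |(lam (j+1) - c) * matCoeff μ 1 (j+1) * matCoeff μ K (j+1)|
      ≤ 4*C1*CK/lam (j+1) + 4*C1*CK*c/(lam (j+1))^2 := by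
    intro j
    have hlamj := hlampos j
    have e1 : |lam (j+1) - c| ≤ lam (j+1) + c :=
      abs_le.mpr ⟨by linarith, by linarith⟩
    have hA : (0:ℝ) ≤ lam (j+1) + c := by linarith
    have hB : (0:ℝ) ≤ (lam (j+1) + c) * (2*C1/lam (j+1)) :=
      mul_nonneg hA (div_nonneg (by linarith) hlamj.le)
    calc |(lam (j+1) - c) * matCoeff μ 1 (j+1) * matCoeff μ K (j+1)|
        = |lam (j+1) - c| * |matCoeff μ 1 (j+1)| * |matCoeff μ K (j+1)| := by
          rw [abs_mul, abs_mul]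
      _ ≤ (lam (j+1) + c) * (2*C1/lam (j+1)) * (2*CK/lam (j+1)) := by
          exact mul_le_mul (mul_le_mul e1 (hb1 j) (abs_nonneg _) hA) (hbK j) (abs_nonneg _) hB
      _ = 4*C1*CK/lam (j+1) + 4*C1*CK*c/(lam (j+1))^2 := by
          field_simp
          ring
  -- relation between the series terms and the Parseval data
  have hterm : ∀ j : ℕ, (lam (j+1) - c) * matCoeff μ 1 (j+1) * matCoeff μ K (j+1)
      = 2 * (sineInt u ((j:ℝ)+1) * sineInt (Fm μ K) ((j:ℝ)+1))
        + 2 * (sineInt (Fm μ 1) ((j:ℝ)+1) * sineInt v ((j:ℝ)+1)) := by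
    intro j
    have hcast : ((j+1:ℕ):ℝ) = (j:ℝ)+1 := by push_cast; ring
    have hrel1 : sineInt (D2m μ 1) ((j:ℝ)+1)
        = -(((((j:ℝ)+1)) * Real.pi)^2 * sineInt (Fm μ 1) ((j:ℝ)+1)) := by
      have := sineInt_D2m hd1 hd2 hc2 1 (j+1)
      rwa [hcast] at this
    have hrelK : sineInt (D2m μ K) ((j:ℝ)+1)
        = -(((((j:ℝ)+1)) * Real.pi)^2 * sineInt (Fm μ K) ((j:ℝ)+1)) := by
      have := sineInt_D2m hd1 hd2 hc2 K (j+1)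
      rwa [hcast] at this
    have hu1 : sineInt u ((j:ℝ)+1)
        = -(sineInt (D2m μ 1) ((j:ℝ)+1)) - c * sineInt (Fm μ 1) ((j:ℝ)+1) := by
      rw [hu]; exact sineInt_comb (hD2c 1) (hFmc 1) c ((j:ℝ)+1)
    have hvK : sineInt v ((j:ℝ)+1)
        = -(sineInt (D2m μ K) ((j:ℝ)+1)) - c * sineInt (Fm μ K) ((j:ℝ)+1) := by
      rw [hv]; exact sineInt_comb (hD2c K) (hFmc K) c ((j:ℝ)+1)
    rw [matCoeff_eq, matCoeff_eq, hcast, hu1, hvK, hrel1, hrelK, hlam' j]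
    ring
  -- the integral identity
  have hiu : IntervalIntegrable (fun x => u x * Fm μ K x) volume 0 1 :=
    (huc.mul (hFmc K)).intervalIntegrable _ _
  have hiv : IntervalIntegrable (fun x => Fm μ 1 x * v x) volume 0 1 :=
    ((hFmc 1).mul hvc).intervalIntegrable _ _
  have hW : ∀ x : ℝ, HasDerivAt
      (fun y => 2 * (μ y * deriv μ y * (Real.sin (Real.pi*y) * Real.sin ((K:ℝ)*Real.pi*y))))
      (2 * ((deriv μ x * deriv μ x + μ x * deriv (deriv μ) x)
          * (Real.sin (Real.pi*x) * Real.sin ((K:ℝ)*Real.pi*x))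
        + μ x * deriv μ x * (Real.pi * Real.cos (Real.pi*x) * Real.sin ((K:ℝ)*Real.pi*x)
          + Real.sin (Real.pi*x) * ((K:ℝ)*Real.pi * Real.cos ((K:ℝ)*Real.pi*x))))) x := by
    intro x
    exact (((hd1 x).mul (hd2 x)).mul
      ((hasDerivAt_sin_mul Real.pi x).mul (hasDerivAt_sin_mul ((K:ℝ)*Real.pi) x))).const_mul 2
  have hWic : IntervalIntegrable (fun x => 2 * ((deriv μ x * deriv μ x + μ x * deriv (deriv μ) x)
          * (Real.sin (Real.pi*x) * Real.sin ((K:ℝ)*Real.pi*x))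
        + μ x * deriv μ x * (Real.pi * Real.cos (Real.pi*x) * Real.sin ((K:ℝ)*Real.pi*x)
          + Real.sin (Real.pi*x) * ((K:ℝ)*Real.pi * Real.cos ((K:ℝ)*Real.pi*x))))) volume 0 1 := by
    apply Continuous.intervalIntegrable
    fun_prop
  have hWftc := intervalIntegral.integral_eq_sub_of_hasDerivAt (fun x _ => hW x) hWic
  have hWzero : ∫ x in (0:ℝ)..1, (2 * ((deriv μ x * deriv μ x + μ x * deriv (deriv μ) x)
          * (Real.sin (Real.pi*x) * Real.sin ((K:ℝ)*Real.pi*x))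
        + μ x * deriv μ x * (Real.pi * Real.cos (Real.pi*x) * Real.sin ((K:ℝ)*Real.pi*x)
          + Real.sin (Real.pi*x) * ((K:ℝ)*Real.pi * Real.cos ((K:ℝ)*Real.pi*x))))) = 0 := by
    rw [hWftc]
    norm_num [Real.sin_pi]
  have hpt : ∀ x : ℝ, u x * Fm μ K x + Fm μ 1 x * v x
      = 2 * ((deriv μ x)^2 * Real.sin (Real.pi*x) * Real.sin ((K:ℝ)*Real.pi*x))
        - (2 * ((deriv μ x * deriv μ x + μ x * deriv (deriv μ) x)
          * (Real.sin (Real.pi*x) * Real.sin ((K:ℝ)*Real.pi*x))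
        + μ x * deriv μ x * (Real.pi * Real.cos (Real.pi*x) * Real.sin ((K:ℝ)*Real.pi*x)
          + Real.sin (Real.pi*x) * ((K:ℝ)*Real.pi * Real.cos ((K:ℝ)*Real.pi*x))))) := by
    intro x
    rw [hu, hv, hcdef]
    unfold Fm D2m lam
    push_cast
    ring
  have hval : (∫ x in (0:ℝ)..1, u x * Fm μ K x) + (∫ x in (0:ℝ)..1, Fm μ 1 x * v x)
      = 2 * ∫ x in (0:ℝ)..1,
          (deriv μ x)^2 * Real.sin (Real.pi*x) * Real.sin ((K:ℝ)*Real.pi*x) := by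
    rw [← intervalIntegral.integral_add hiu hiv]
    have hi2 : IntervalIntegrable (fun x => 2 * ((deriv μ x)^2 * Real.sin (Real.pi*x)
        * Real.sin ((K:ℝ)*Real.pi*x))) volume 0 1 := by
      apply Continuous.intervalIntegrable; fun_prop
    rw [intervalIntegral.integral_congr (g := fun x => 2 * ((deriv μ x)^2 * Real.sin (Real.pi*x) * Real.sin ((K:ℝ)*Real.pi*x))
        - (2 * ((deriv μ x * deriv μ x + μ x * deriv (deriv μ) x)
          * (Real.sin (Real.pi*x) * Real.sin ((K:ℝ)*Real.pi*x))
        + μ x * deriv μ x * (Real.pi * Real.cos (Real.pi*x) * Real.sin ((K:ℝ)*Real.pi*x)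
          + Real.sin (Real.pi*x) * ((K:ℝ)*Real.pi * Real.cos ((K:ℝ)*Real.pi*x))))))
      (fun x _ => hpt x)]
    rw [intervalIntegral.integral_sub hi2 hWic, hWzero, sub_zero,
      intervalIntegral.integral_const_mul]
  -- assemble the HasSum
  have hP1 := parseval_sine huc (hFmc K)
  have hP2 := parseval_sine (hFmc 1) hvc
  have hsum0 := hP1.add hP2
  have hfinal : HasSum (fun j : ℕ => (lam (j+1) - c) * matCoeff μ 1 (j+1) * matCoeff μ K (j+1))
      (2 * ∫ x in (0:ℝ)..1,
        (deriv μ x)^2 * Real.sin (Real.pi*x) * Real.sin ((K:ℝ)*Real.pi*x)) := by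
    have hfun : (fun j : ℕ => (lam (j+1) - c) * matCoeff μ 1 (j+1) * matCoeff μ K (j+1))
        = fun j : ℕ => 2 * (sineInt u ((j:ℝ)+1) * sineInt (Fm μ K) ((j:ℝ)+1))
          + 2 * (sineInt (Fm μ 1) ((j:ℝ)+1) * sineInt v ((j:ℝ)+1)) := funext hterm
    rw [hfun, ← hval]
    exact hsum0
  constructor
  · exact Summable.of_nonneg_of_le (fun j => abs_nonneg _) hcmp hgsum
  · exact hfinal.tsum_eq
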